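/- With S = {(1,1),(1,2),(2,1)}, a_S(ℓ₁,ℓ₂) = Σ_{k=⌈max(ℓ₁,ℓ₂)/2⌉}^{min(ℓ₁,ℓ₂)} Σ_{j≥0} (−1)^j · C(k,j) · C(k−j, ℓ₁−k−j) · C(k−j, ℓ₂−k−j). -/

import Mathlib

/-- Total number of `S`-alignments of lengths `ℓ`: `N × k` matrices over `ℕ`
(for any `k ≥ 0`) with all columns in `S` and `i`-th row summing to `ℓ i`. -/
noncomputable def alignCount (N : ℕ) (S : Set (Fin N → ℕ)) (ℓ : Fin N → ℕ) : ℕ :=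
  Nat.card {A : Σ k : ℕ, Fin k → Fin N → ℕ //
    (∀ j, A.2 j ∈ S) ∧ ∀ i, ∑ j, A.2 j i = ℓ i}

/-- Binomial coefficient `C(n, m)` for integer arguments, vanishing whenever
`m < 0`, `m > n`, or `n < 0`. -/
def chooseZ (n m : ℤ) : ℕ :=
  if 0 ≤ n ∧ 0 ≤ m ∧ m ≤ n then n.toNat.choose m.toNat else 0

open Finset

lemma card_superset (k : ℕ) (J : Finset (Fin k)) (m : ℕ) :
    ((univ.filter fun T : Finset (Fin k) => J ⊆ T ∧ T.card = m).card : ℤ)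
      = chooseZ ((k:ℤ) - J.card) ((m:ℤ) - J.card) := by
  have hJk : J.card ≤ k := by simpa using card_le_card (subset_univ J)
  by_cases h1 : J.card ≤ m ∧ m ≤ k
  · obtain ⟨hjm, hmk⟩ := h1
    have : (univ.filter fun T : Finset (Fin k) => J ⊆ T ∧ T.card = m).card
        = ((univ \ J).powersetCard (m - J.card)).card := by
      apply Finset.card_bij' (fun T _ => T \ J) (fun U _ => U ∪ J)
      · intro T hT
        simp only [mem_filter, mem_univ, true_and] at hT
        rw [mem_powersetCard]
        exact ⟨sdiff_subset_sdiff (subset_univ T) le_rfl,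
          by rw [card_sdiff_of_subset hT.1, hT.2]⟩
      · intro U hU
        rw [mem_powersetCard] at hU
        have hUJ : Disjoint U J := by
          have := hU.1
          exact disjoint_of_subset_left this sdiff_disjoint
        simp only [mem_filter, mem_univ, true_and]
        constructor
        · exact subset_union_right
        · rw [card_union_of_disjoint hUJ, hU.2]
          omega
      · intro T hT
        simp only [mem_filter, mem_univ, true_and] at hT
        exact sdiff_union_of_subset hT.1
      · intro U hU
        rw [mem_powersetCard] at hU
        have hUJ : Disjoint U J := disjoint_of_subset_left hU.1 sdiff_disjoint
        rw [union_sdiff_right, sdiff_eq_self_of_disjoint hUJ]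
    rw [this, card_powersetCard, card_sdiff_of_subset (subset_univ J), card_univ, Fintype.card_fin]
    have e1 : ((k:ℤ) - J.card).toNat = k - J.card := by omega
    have e2 : ((m:ℤ) - J.card).toNat = m - J.card := by omega
    rw [chooseZ, if_pos (by omega), e1, e2]
  · have hempty : (univ.filter fun T : Finset (Fin k) => J ⊆ T ∧ T.card = m) = ∅ := by
      rw [filter_eq_empty_iff]
      intro T _
      rintro ⟨hJT, rfl⟩
      have h1 := card_le_card hJT
      have h2 : T.card ≤ k := by simpa using card_le_card (subset_univ T)
      omega
    rw [hempty, card_empty, chooseZ, if_neg (by omega)]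

lemma card_disjoint_pairs (k m₁ m₂ : ℕ) :
    ((univ.filter fun p : Finset (Fin k) × Finset (Fin k) =>
        Disjoint p.1 p.2 ∧ p.1.card = m₁ ∧ p.2.card = m₂).card : ℤ)
      = ∑ j ∈ range (k+1), (-1:ℤ)^j * k.choose j *
          chooseZ ((k:ℤ)-(j:ℤ)) ((m₁:ℤ)-(j:ℤ)) * chooseZ ((k:ℤ)-(j:ℤ)) ((m₂:ℤ)-(j:ℤ)) := by
  classical
  set P : Finset (Finset (Fin k) × Finset (Fin k)) :=
    univ.filter fun p => p.1.card = m₁ ∧ p.2.card = m₂ with hP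
  have step1 : (univ.filter fun p : Finset (Fin k) × Finset (Fin k) =>
        Disjoint p.1 p.2 ∧ p.1.card = m₁ ∧ p.2.card = m₂)
      = P.filter fun p => p.1 ∩ p.2 = ∅ := by
    rw [hP, filter_filter]
    apply filter_congr
    intro p _
    simp only [Finset.disjoint_iff_inter_eq_empty]
    tauto
  have step2 : ((P.filter fun p => p.1 ∩ p.2 = ∅).card : ℤ)
      = ∑ p ∈ P, ∑ J ∈ (p.1 ∩ p.2).powerset, (-1:ℤ)^J.card := by
    rw [card_filter]
    push_cast
    refine sum_congr rfl fun p _ => ?_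
    rw [sum_powerset_neg_one_pow_card]
  have step3 : ∀ p : Finset (Fin k) × Finset (Fin k),
      ∑ J ∈ (p.1 ∩ p.2).powerset, (-1:ℤ)^J.card
        = ∑ J ∈ (univ : Finset (Fin k)).powerset,
            if J ⊆ p.1 ∩ p.2 then (-1:ℤ)^J.card else 0 := by
    intro p
    rw [← sum_filter]
    congr 1
    ext J
    simp only [mem_filter, mem_powerset, subset_univ, true_and]
  have step4 : ∀ J : Finset (Fin k),
      ∑ p ∈ P, (if J ⊆ p.1 ∩ p.2 then (-1:ℤ)^J.card else 0)
        = (-1:ℤ)^J.card * (chooseZ ((k:ℤ)-(J.card:ℤ)) ((m₁:ℤ)-(J.card:ℤ)) *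
            chooseZ ((k:ℤ)-(J.card:ℤ)) ((m₂:ℤ)-(J.card:ℤ))) := by
    intro J
    rw [← sum_filter, sum_const, hP, filter_filter]
    have hprod : (univ.filter fun p : Finset (Fin k) × Finset (Fin k) =>
        (p.1.card = m₁ ∧ p.2.card = m₂) ∧ J ⊆ p.1 ∩ p.2)
      = (univ.filter fun T : Finset (Fin k) => J ⊆ T ∧ T.card = m₁) ×ˢ
        (univ.filter fun T : Finset (Fin k) => J ⊆ T ∧ T.card = m₂) := by
      ext p
      simp only [mem_filter, mem_product, mem_univ, true_and, subset_inter_iff]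
      tauto
    rw [hprod, card_product, nsmul_eq_mul]
    push_cast
    rw [card_superset, card_superset]
    ring
  rw [step1, step2]
  simp_rw [step3]
  rw [sum_comm]
  simp_rw [step4]
  rw [sum_powerset_apply_card (fun j => (-1:ℤ)^j * (chooseZ ((k:ℤ)-(j:ℤ)) ((m₁:ℤ)-(j:ℤ)) *
            chooseZ ((k:ℤ)-(j:ℤ)) ((m₂:ℤ)-(j:ℤ))))]
  rw [card_univ, Fintype.card_fin]
  refine sum_congr rfl fun j _ => ?_
  rw [nsmul_eq_mul]
  ring

/-- matrix built from a pair of disjoint subsets -/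
def mkMat (k : ℕ) (p : Finset (Fin k) × Finset (Fin k)) : Fin k → Fin 2 → ℕ :=
  fun j => if j ∈ p.1 then ![2,1] else if j ∈ p.2 then ![1,2] else ![1,1]

lemma ne12 : (![1,2] : Fin 2 → ℕ) ≠ ![2,1] := by
  intro h; have := congrFun h 0; simp at this

lemma ne11 : (![1,1] : Fin 2 → ℕ) ≠ ![2,1] := by
  intro h; have := congrFun h 0; simp at this

lemma ne11' : (![1,1] : Fin 2 → ℕ) ≠ ![1,2] := by
  intro h; have := congrFun h 1; simp at this

lemma align_eq (ℓ₁ ℓ₂ : ℕ) :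
    alignCount 2 {![1, 1], ![1, 2], ![2, 1]} ![ℓ₁, ℓ₂]
      = ∑ k ∈ range (min ℓ₁ ℓ₂ + 1),
          (univ.filter fun p : Finset (Fin k) × Finset (Fin k) =>
            Disjoint p.1 p.2 ∧ p.1.card + k = ℓ₁ ∧ p.2.card + k = ℓ₂).card := by
  classical
  set M := min ℓ₁ ℓ₂ with hM
  set S : Set (Fin 2 → ℕ) := {![1, 1], ![1, 2], ![2, 1]} with hS
  set D : ∀ k : ℕ, Type := fun k => {p : Finset (Fin k) × Finset (Fin k) //
      Disjoint p.1 p.2 ∧ p.1.card + k = ℓ₁ ∧ p.2.card + k = ℓ₂} with hD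
  set T : Type := {A : Σ k : ℕ, Fin k → Fin 2 → ℕ //
    (∀ j, A.2 j ∈ S) ∧ ∀ i, ∑ j, A.2 j i = ![ℓ₁, ℓ₂] i} with hT
  -- row-sum values of mkMat
  have row0 : ∀ (k : ℕ) (p : Finset (Fin k) × Finset (Fin k)), Disjoint p.1 p.2 →
      ∑ j, mkMat k p j 0 = k + p.1.card := by
    intro k p hd
    have : ∀ j, mkMat k p j 0 = 1 + (if j ∈ p.1 then 1 else 0) := by
      intro j
      by_cases h1 : j ∈ p.1
      · simp [mkMat, h1]
      · by_cases h2 : j ∈ p.2 <;> simp [mkMat, h1, h2]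
    simp_rw [this]
    rw [Finset.sum_add_distrib, Finset.sum_ite_mem, univ_inter, sum_const, sum_const]
    simp [mul_comm]
  have row1 : ∀ (k : ℕ) (p : Finset (Fin k) × Finset (Fin k)), Disjoint p.1 p.2 →
      ∑ j, mkMat k p j 1 = k + p.2.card := by
    intro k p hd
    have : ∀ j, mkMat k p j 1 = 1 + (if j ∈ p.2 then 1 else 0) := by
      intro j
      by_cases h1 : j ∈ p.1
      · have h2 : j ∉ p.2 := Finset.disjoint_left.mp hd h1
        simp [mkMat, h1, h2]
      · by_cases h2 : j ∈ p.2 <;> simp [mkMat, h1, h2]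
    simp_rw [this]
    rw [Finset.sum_add_distrib, Finset.sum_ite_mem, univ_inter, sum_const, sum_const]
    simp [mul_comm]
  -- the map
  have colS : ∀ (k : ℕ) (p : Finset (Fin k) × Finset (Fin k)) (j : Fin k),
      mkMat k p j ∈ S := by
    intro k p j
    unfold mkMat
    split_ifs <;> simp [hS]
  set Φ : (Σ k : Fin (M+1), D k) → T := fun x =>
    ⟨⟨(x.1 : ℕ), mkMat x.1 x.2.1⟩, fun j => colS _ _ j, by
      intro i
      fin_cases i
      · simpa [row0 _ _ x.2.2.1] using (Nat.add_comm _ _).trans x.2.2.2.1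
      · simpa [row1 _ _ x.2.2.1] using (Nat.add_comm _ _).trans x.2.2.2.2⟩ with hΦ
  have hmem : ∀ (k : ℕ) (p : Finset (Fin k) × Finset (Fin k)) (j : Fin k),
      (j ∈ p.1 ↔ mkMat k p j = ![2,1]) ∧
      (Disjoint p.1 p.2 → (j ∈ p.2 ↔ mkMat k p j = ![1,2])) := by
    intro k p j
    constructor
    · by_cases h1 : j ∈ p.1
      · simp [mkMat, h1]
      · by_cases h2 : j ∈ p.2
        · simp [mkMat, h1, h2, ne12]
        · simp [mkMat, h1, h2, ne11]
    · intro hd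
      by_cases h1 : j ∈ p.1
      · have h2 : j ∉ p.2 := Finset.disjoint_left.mp hd h1
        simp [mkMat, h1, h2, ne12.symm]
      · by_cases h2 : j ∈ p.2
        · simp [mkMat, h1, h2]
        · simp [mkMat, h1, h2, ne11']
  have hinj : Function.Injective Φ := by
    rintro ⟨k, p, hp⟩ ⟨k', p', hp'⟩ h
    rw [hΦ, Subtype.mk_eq_mk] at h
    obtain ⟨hk, hA⟩ := Sigma.mk.inj_iff.mp h
    have hkk : k = k' := Fin.ext hk
    subst hkk
    have hAA : mkMat (k : ℕ) p = mkMat (k : ℕ) p' := eq_of_heq hA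
    have hp1 : p.1 = p'.1 := by
      ext j
      rw [(hmem k p j).1, (hmem k p' j).1, hAA]
    have hp2 : p.2 = p'.2 := by
      ext j
      rw [(hmem k p j).2 hp.1, (hmem k p' j).2 hp'.1, hAA]
    obtain rfl : p = p' := Prod.ext hp1 hp2
    rfl
  have hsurj : Function.Surjective Φ := by
    rintro ⟨⟨k, A⟩, hcol, hsum⟩
    have hcol' : ∀ j, A j = ![1,1] ∨ A j = ![1,2] ∨ A j = ![2,1] := by
      intro j
      have := hcol j
      simpa [hS, Set.mem_insert_iff] using this
    set P1 : Finset (Fin k) := univ.filter fun j => A j = ![2,1] with hP1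
    set P2 : Finset (Fin k) := univ.filter fun j => A j = ![1,2] with hP2
    have hent0 : ∀ j, A j 0 = 1 + (if j ∈ P1 then 1 else 0) := by
      intro j
      rcases hcol' j with h | h | h <;> simp [hP1, h, ne11, ne12]
    have hent1 : ∀ j, A j 1 = 1 + (if j ∈ P2 then 1 else 0) := by
      intro j
      rcases hcol' j with h | h | h <;> simp [hP2, h, ne11', ne12.symm]
    have hs0 : k + P1.card = ℓ₁ := by
      have := hsum 0
      simp only [Matrix.cons_val_zero] at this
      rw [← this]
      simp_rw [hent0]
      rw [Finset.sum_add_distrib, Finset.sum_ite_mem, univ_inter, sum_const, sum_const]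
      simp [mul_comm]
    have hs1 : k + P2.card = ℓ₂ := by
      have := hsum 1
      simp only [Matrix.cons_val_one, Matrix.head_cons, Matrix.cons_val_zero] at this
      rw [← this]
      simp_rw [hent1]
      rw [Finset.sum_add_distrib, Finset.sum_ite_mem, univ_inter, sum_const, sum_const]
      simp [mul_comm]
    have hdisj : Disjoint P1 P2 := by
      rw [Finset.disjoint_left]
      intro j h1 h2
      rw [hP1, mem_filter] at h1
      rw [hP2, mem_filter] at h2
      exact ne12 (h2.2.symm.trans h1.2)
    have hkM : k < M + 1 := by omega
    refine ⟨⟨⟨k, hkM⟩, ⟨(P1, P2), hdisj, by simp only [Fin.val_mk]; omega, by simp only [Fin.val_mk]; omega⟩⟩, ?_⟩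
    rw [hΦ]
    apply Subtype.ext
    simp only
    congr 1
    apply funext
    intro j
    rcases hcol' j with h | h | h
    · have h1 : j ∉ P1 := by simp [hP1, h, ne11]
      have h2 : j ∉ P2 := by simp [hP2, h, ne11']
      simp [mkMat, h1, h2, h]
    · have h1 : j ∉ P1 := by simp [hP1, h, ne12]
      have h2 : j ∈ P2 := by simp [hP2, h]
      simp [mkMat, h1, h2, h]
    · have h1 : j ∈ P1 := by simp [hP1, h]
      simp [mkMat, h1, h]
  have hbij : Function.Bijective Φ := ⟨hinj, hsurj⟩
  have : alignCount 2 S ![ℓ₁, ℓ₂] = Nat.card (Σ k : Fin (M+1), D k) := by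
    rw [alignCount]
    exact (Nat.card_eq_of_bijective Φ hbij).symm
  rw [this, Nat.card_eq_fintype_card, Fintype.card_sigma]
  rw [← Fin.sum_univ_eq_sum_range]
  refine Finset.sum_congr rfl fun k _ => ?_
  exact Fintype.card_subtype _


theorem stmt_6 (ℓ₁ ℓ₂ : ℕ) :
    (alignCount 2 {![1, 1], ![1, 2], ![2, 1]} ![ℓ₁, ℓ₂] : ℤ) =
      ∑ k ∈ Finset.Icc ((max ℓ₁ ℓ₂ + 1) / 2) (min ℓ₁ ℓ₂),
        ∑ j ∈ Finset.range (k + 1),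
          (-1 : ℤ) ^ j * k.choose j *
            chooseZ (k - j) (ℓ₁ - k - j) * chooseZ (k - j) (ℓ₂ - k - j) := by
  classical
  rw [align_eq]
  push_cast
  have hsub : Finset.Icc ((max ℓ₁ ℓ₂ + 1) / 2) (min ℓ₁ ℓ₂) ⊆ range (min ℓ₁ ℓ₂ + 1) := by
    intro k hk
    rw [Finset.mem_Icc] at hk
    rw [Finset.mem_range]
    omega
  rw [← Finset.sum_subset hsub]
  · refine Finset.sum_congr rfl fun k hk => ?_
    rw [Finset.mem_Icc] at hk
    have hk1 : k ≤ ℓ₁ := by omega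
    have hk2 : k ≤ ℓ₂ := by omega
    have hfe : (univ.filter fun p : Finset (Fin k) × Finset (Fin k) =>
          Disjoint p.1 p.2 ∧ p.1.card + k = ℓ₁ ∧ p.2.card + k = ℓ₂)
        = univ.filter fun p : Finset (Fin k) × Finset (Fin k) =>
          Disjoint p.1 p.2 ∧ p.1.card = ℓ₁ - k ∧ p.2.card = ℓ₂ - k := by
      apply filter_congr
      intro p _
      constructor <;> rintro ⟨a, b, c⟩ <;> exact ⟨a, by omega, by omega⟩
    rw [hfe, card_disjoint_pairs k (ℓ₁ - k) (ℓ₂ - k)]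
    refine Finset.sum_congr rfl fun j _ => ?_
    have e1 : ((ℓ₁ - k : ℕ) : ℤ) = (ℓ₁ : ℤ) - k := by omega
    have e2 : ((ℓ₂ - k : ℕ) : ℤ) = (ℓ₂ : ℤ) - k := by omega
    rw [e1, e2, sub_sub, sub_sub]
  · intro k hkr hki
    rw [Finset.mem_range] at hkr
    rw [Finset.mem_Icc] at hki
    have hfe : (univ.filter fun p : Finset (Fin k) × Finset (Fin k) =>
          Disjoint p.1 p.2 ∧ p.1.card + k = ℓ₁ ∧ p.2.card + k = ℓ₂) = ∅ := by
      rw [filter_eq_empty_iff]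
      rintro p _ ⟨hd, e1, e2⟩
      have c1 : p.1.card ≤ k := by
        simpa using Finset.card_le_univ p.1
      have c2 : p.2.card ≤ k := by
        simpa using Finset.card_le_univ p.2
      omega
    rw [hfe]
    simp
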